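/- Let $K$ be a multiple of $\ell \geq 1$, $\pmb{w}$ a nonincreasing nonnegative weight vector of length $K$ summing to 1, and $\pmb{a}$ a nonzero nonnegative real vector of length $K$. With aggregated vectors $\overline{a}_k = \frac{1}{\ell}\sum_{i=(k-1)\ell+1}^{k\ell} a_i$ and $\overline{w}_k = \sum_{i=(k-1)\ell+1}^{k\ell} w_i$, and $\rho = \max_{k \in [K/\ell]} \frac{\sum_{i=1}^k w_i}{\sum_{i=1}^k \overline{w}_i}$, one has $\mathrm{OWA}_{\pmb{w}}(\pmb{a}) \leq \ell\rho \cdot \mathrm{OWA}_{\overline{\pmb{w}}}(\overline{\pmb{a}})$. -/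

import Mathlib

open Finset

/-- Abel-type comparison: with antitone nonnegative coefficients `u`, prefix-sum
domination `g ≼ h` implies domination of the weighted sums. -/
lemma abel_le (n : ℕ) (u g h : ℕ → ℝ)
    (hu : ∀ i j, i ≤ j → u j ≤ u i) (hu0 : ∀ i, 0 ≤ u i)
    (hpre : ∀ k, k ≤ n → ∑ i ∈ range k, g i ≤ ∑ i ∈ range k, h i) :
    ∑ i ∈ range n, u i * g i ≤ ∑ i ∈ range n, u i * h i := by
  induction n generalizing u with
  | zero => simp
  | succ n ih =>
    have e1 : ∀ f : ℕ → ℝ, ∑ i ∈ range n, (u (min i n) - u n) * f i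
        = ∑ i ∈ range n, u i * f i - u n * ∑ i ∈ range n, f i := by
      intro f
      rw [Finset.mul_sum, ← Finset.sum_sub_distrib]
      refine Finset.sum_congr rfl fun i hi => ?_
      rw [min_eq_left (le_of_lt (Finset.mem_range.mp hi)), sub_mul]
    have h1 := ih (fun i => u (min i n) - u n)
      (fun i j hij => by have := hu (min i n) (min j n) (by omega); linarith)
      (fun i => by have := hu (min i n) n (min_le_right _ _); linarith)
      (fun k hk => hpre k (by omega))
    rw [e1 g, e1 h] at h1
    have h2 : u n * ∑ i ∈ range (n+1), g i ≤ u n * ∑ i ∈ range (n+1), h i :=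
      mul_le_mul_of_nonneg_left (hpre (n+1) le_rfl) (hu0 n)
    rw [Finset.sum_range_succ g, Finset.sum_range_succ h] at h2
    rw [Finset.sum_range_succ, Finset.sum_range_succ]
    nlinarith [h1, h2]

/-- Sum of an antitone sequence over any finite set is at most the sum over an
initial segment of the same size. -/
lemma sum_le_sorted (h : ℕ → ℝ) (hh : ∀ i j, i ≤ j → h j ≤ h i)
    (T : Finset ℕ) : ∑ i ∈ T, h i ≤ ∑ j ∈ range T.card, h j := by
  suffices H : ∀ r (T : Finset ℕ), T.card = r → ∑ i ∈ T, h i ≤ ∑ j ∈ range r, h j by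
    exact (H T.card T rfl).trans_eq rfl
  intro r
  induction r with
  | zero => intro T hc; simp [Finset.card_eq_zero.mp hc]
  | succ r ih =>
    intro T hc
    have hne : T.Nonempty := Finset.card_pos.mp (by omega)
    have hMT : T.max' hne ∈ T := T.max'_mem hne
    have hsub : T ⊆ range (T.max' hne + 1) := fun x hx =>
      Finset.mem_range.mpr (Nat.lt_succ_of_le (T.le_max' x hx))
    have hrM : r ≤ T.max' hne := by
      have := Finset.card_le_card hsub
      rw [hc, Finset.card_range] at this; omega
    have hcard : (T.erase (T.max' hne)).card = r := by
      rw [Finset.card_erase_of_mem hMT, hc]; rfl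
    have hsplit : ∑ i ∈ T, h i = ∑ i ∈ T.erase (T.max' hne), h i + h (T.max' hne) :=
      (Finset.sum_erase_add _ _ hMT).symm
    rw [Finset.sum_range_succ, hsplit]
    have := hh r (T.max' hne) hrM
    linarith [ih (T.erase (T.max' hne)) hcard]

lemma sum_Iic_fin {m : ℕ} (f : Fin m → ℝ) (g : ℕ → ℝ) (t : Fin m)
    (hfg : ∀ i : Fin m, i ≤ t → f i = g i.val) :
    ∑ i ∈ Finset.Iic t, f i = ∑ n ∈ Finset.range (t.val + 1), g n := by
  refine Finset.sum_nbij' (i := fun x => (x : ℕ))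
    (j := fun n => ⟨min n t.val, lt_of_le_of_lt (min_le_right _ _) t.isLt⟩)
    (fun x hx => ?_) (fun n hn => ?_) (fun x hx => ?_) (fun n hn => ?_) (fun x hx => ?_)
  · simp only [Finset.mem_Iic] at hx
    simp only [Finset.mem_range]
    omega
  · simp only [Finset.mem_range] at hn
    simp only [Finset.mem_Iic, Fin.le_def]
    simp
  · simp only [Finset.mem_Iic, Fin.le_def] at hx
    ext
    simp [Nat.min_eq_left hx]
  · simp only [Finset.mem_range] at hn
    simp
    omega
  · exact hfg x (Finset.mem_Iic.mp hx)



/-- OWA of a vector with nonincreasing weights: weights are applied to the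
entries sorted in nonincreasing order. -/
noncomputable def OWA {K : ℕ} (w a : Fin K → ℝ) : ℝ :=
  ∑ k, w k * a (Tuple.sort (fun i => -a i) k)

/-- Block-aggregated weights. -/
noncomputable def aggW (m ℓ : ℕ) (w : Fin (m * ℓ) → ℝ) : Fin m → ℝ :=
  fun k => ∑ i : Fin ℓ, w (finProdFinEquiv (k, i))

/-- Block-aggregated vector (block averages). -/
noncomputable def aggA (m ℓ : ℕ) (a : Fin (m * ℓ) → ℝ) : Fin m → ℝ :=
  fun k => (∑ i : Fin ℓ, a (finProdFinEquiv (k, i))) / ℓ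

/-- Lemma 3(b): OWA of the original vector is at most `ℓ ρ` times the OWA of
the aggregated vector, where `ρ` is the maximum prefix-sum ratio of the
weights. -/
theorem owa_aggregation_upper (m ℓ : ℕ) (hm : 0 < m) (hℓ : 1 ≤ ℓ)
    (a w : Fin (m * ℓ) → ℝ)
    (ha : ∀ k, 0 ≤ a k) (hane : a ≠ 0)
    (hw : Antitone w) (hw0 : ∀ k, 0 ≤ w k) (hw1 : ∑ k, w k = 1)
    (ρ : ℝ)
    (hρ : ρ = Finset.univ.sup'
      (Finset.univ_nonempty_iff.mpr (Fin.pos_iff_nonempty.mp hm))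
      (fun t : Fin m =>
        (∑ i ∈ Finset.Iic t, w (Fin.castLE (Nat.le_mul_of_pos_right m hℓ) i)) /
        (∑ i ∈ Finset.Iic t, aggW m ℓ w i))) :
    OWA w a ≤ (ℓ : ℝ) * ρ * OWA (aggW m ℓ w) (aggA m ℓ a) := by
  classical
  have hKm : m ≤ m * ℓ := Nat.le_mul_of_pos_right m hℓ
  have hℓR : (0:ℝ) < ℓ := by exact_mod_cast hℓ
  set σ : Equiv.Perm (Fin (m * ℓ)) := Tuple.sort (fun i => -a i) with hσ
  set τ : Equiv.Perm (Fin m) := Tuple.sort (fun i => -(aggA m ℓ a) i) with hτ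
  set S : Fin m → ℝ := fun t => ∑ i : Fin ℓ, a (finProdFinEquiv (t, i)) with hSdef
  have hS0 : ∀ t, 0 ≤ S t := fun t => Finset.sum_nonneg fun i _ => ha _
  have hSA : ∀ t, aggA m ℓ a t = S t / ℓ := fun t => rfl
  set bN : ℕ → ℝ := fun i => if hi : i < m * ℓ then a (σ ⟨i, hi⟩) else 0 with hbN
  set cN : ℕ → ℝ := fun j => if hj : j < m then S (τ ⟨j, hj⟩) else 0 with hcN
  set wN : ℕ → ℝ := fun i => if hi : i < m * ℓ then w ⟨i, hi⟩ else 0 with hwN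
  set vN : ℕ → ℝ := fun j => if hj : j < m then aggW m ℓ w ⟨j, hj⟩ else 0 with hvN
  -- antitonicity of the sorted sequences
  have hb_anti : ∀ i j : Fin (m*ℓ), i ≤ j → a (σ j) ≤ a (σ i) := by
    intro i j hij
    have h2 := Tuple.monotone_sort (fun i => -a i) hij
    simp only [Function.comp_apply, neg_le_neg_iff] at h2
    rw [hσ]; exact h2
  have hc_anti : ∀ i j : Fin m, i ≤ j → S (τ j) ≤ S (τ i) := by
    intro i j hij
    have h2 := Tuple.monotone_sort (fun i => -(aggA m ℓ a) i) hij
    simp only [Function.comp_apply, neg_le_neg_iff] at h2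
    rw [hSA, hSA] at h2
    rw [hτ]
    exact (div_le_div_iff_of_pos_right hℓR).mp h2
  have hbN0 : ∀ i, 0 ≤ bN i := by
    intro i; rw [hbN]; dsimp only; split
    · exact ha _
    · exact le_rfl
  have hcN0 : ∀ i, 0 ≤ cN i := by
    intro i; rw [hcN]; dsimp only; split
    · exact hS0 _
    · exact le_rfl
  have hwN0 : ∀ i, 0 ≤ wN i := by
    intro i; rw [hwN]; dsimp only; split
    · exact hw0 _
    · exact le_rfl
  have hvN0 : ∀ i, 0 ≤ vN i := by
    intro i; rw [hvN]; dsimp only; split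
    · exact Finset.sum_nonneg fun r _ => hw0 _
    · exact le_rfl
  have hbN_anti : ∀ i j : ℕ, i ≤ j → bN j ≤ bN i := by
    intro i j hij
    by_cases hj : j < m * ℓ
    · have hi : i < m * ℓ := lt_of_le_of_lt hij hj
      rw [hbN]; dsimp only; rw [dif_pos hj, dif_pos hi]
      exact hb_anti ⟨i, hi⟩ ⟨j, hj⟩ hij
    · rw [hbN]; dsimp only; rw [dif_neg hj]
      exact hbN0 i
  have hcN_anti : ∀ i j : ℕ, i ≤ j → cN j ≤ cN i := by
    intro i j hij
    by_cases hj : j < m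
    · have hi : i < m := lt_of_le_of_lt hij hj
      rw [hcN]; dsimp only; rw [dif_pos hj, dif_pos hi]
      exact hc_anti ⟨i, hi⟩ ⟨j, hj⟩ hij
    · rw [hcN]; dsimp only; rw [dif_neg hj]
      exact hcN0 i
  have hwN_anti : ∀ i j : ℕ, i ≤ j → wN j ≤ wN i := by
    intro i j hij
    by_cases hj : j < m * ℓ
    · have hi : i < m * ℓ := lt_of_le_of_lt hij hj
      rw [hwN]; dsimp only; rw [dif_pos hj, dif_pos hi]
      exact hw hij
    · rw [hwN]; dsimp only; rw [dif_neg hj]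
      exact hwN0 i
  -- the prefix-sum comparison between bN and cN
  have key1core : ∀ k, k ≤ m * ℓ → ∑ i ∈ range k, bN i ≤ ∑ i ∈ range k, cN i := by
    intro k hk
    set F : Finset (Fin (m * ℓ)) := Finset.univ.filter (fun i => (i : ℕ) < k) with hF
    set T : Finset (Fin m) := F.image (fun i => (finProdFinEquiv.symm (σ i)).1) with hT
    have e0 : ∑ i ∈ range k, bN i = ∑ i ∈ F, a (σ i) := by
      have hrk : range k = (range (m * ℓ)).filter (fun i => i < k) := by
        ext x; simp only [Finset.mem_filter, Finset.mem_range]; omega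
      rw [hrk, Finset.sum_filter,
        ← Fin.sum_univ_eq_sum_range (fun i => if i < k then bN i else 0) (m * ℓ),
        hF, Finset.sum_filter]
      refine Finset.sum_congr rfl fun i _ => ?_
      by_cases h : (i : ℕ) < k
      · rw [if_pos h, if_pos h, hbN]; dsimp only; rw [dif_pos i.isLt]
      · rw [if_neg h, if_neg h]
    have e1 : ∑ i ∈ F, a (σ i) = ∑ x ∈ F.image σ, a x :=
      (Finset.sum_image fun i _ j _ h => σ.injective h).symm
    set B : Finset (Fin (m * ℓ)) :=
      Finset.univ.filter (fun x => (finProdFinEquiv.symm x).1 ∈ T) with hB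
    have hsubB : F.image σ ⊆ B := by
      intro x hx
      obtain ⟨i, hi, rfl⟩ := Finset.mem_image.mp hx
      rw [hB, Finset.mem_filter]
      exact ⟨Finset.mem_univ _, Finset.mem_image_of_mem _ hi⟩
    have e2 : ∑ x ∈ F.image σ, a x ≤ ∑ x ∈ B, a x :=
      Finset.sum_le_sum_of_subset_of_nonneg hsubB fun x _ _ => ha x
    have e3 : ∑ x ∈ B, a x = ∑ t ∈ T, S t := by
      have h1 : ∑ x ∈ B, a x
          = ∑ x : Fin (m * ℓ), (if (finProdFinEquiv.symm x).1 ∈ T then a x else 0) := by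
        rw [hB, Finset.sum_filter]
      have h2 : ∑ x : Fin (m * ℓ), (if (finProdFinEquiv.symm x).1 ∈ T then a x else 0)
          = ∑ p : Fin m × Fin ℓ,
            (if (finProdFinEquiv.symm (finProdFinEquiv p)).1 ∈ T
              then a (finProdFinEquiv p) else 0) :=
        (Equiv.sum_comp finProdFinEquiv _).symm
      have h3 : ∀ p : Fin m × Fin ℓ,
          (if (finProdFinEquiv.symm (finProdFinEquiv p)).1 ∈ T
            then a (finProdFinEquiv p) else 0)
          = (if p.1 ∈ T then a (finProdFinEquiv p) else 0) := by
        intro p; rw [Equiv.symm_apply_apply]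
      have h4 : ∑ p : Fin m × Fin ℓ, (if p.1 ∈ T then a (finProdFinEquiv p) else 0)
          = ∑ t : Fin m, (if t ∈ T then S t else 0) := by
        rw [Fintype.sum_prod_type]
        refine Finset.sum_congr rfl fun t _ => ?_
        by_cases h : t ∈ T
        · simp only [if_pos h]; rfl
        · simp only [if_neg h, Finset.sum_const_zero]
      rw [h1, h2, Finset.sum_congr rfl fun p _ => h3 p, h4,
        Finset.sum_ite_mem, Finset.univ_inter]
    have hTk : T.card ≤ k := by
      have h1 : T.card ≤ F.card := Finset.card_image_le
      have h2 : F.card ≤ k := by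
        have h3 : F.image (fun i : Fin (m * ℓ) => (i : ℕ)) ⊆ range k := by
          intro x hx
          obtain ⟨i, hi, rfl⟩ := Finset.mem_image.mp hx
          rw [hF] at hi; simp only [Finset.mem_filter] at hi
          exact Finset.mem_range.mpr hi.2
        calc F.card = (F.image (fun i : Fin (m * ℓ) => (i : ℕ))).card :=
              (Finset.card_image_of_injective F Fin.val_injective).symm
          _ ≤ (range k).card := Finset.card_le_card h3
          _ = k := Finset.card_range k
      omega
    set T' : Finset ℕ := T.image (fun t => ((τ.symm t : Fin m) : ℕ)) with hT'
    have hT'card : T'.card = T.card := Finset.card_image_of_injective _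
      (fun x y hxy => by
        have : τ.symm x = τ.symm y := Fin.val_injective hxy
        exact τ.symm.injective this)
    have e5 : ∑ t ∈ T, S t = ∑ n ∈ T', cN n := by
      have hinj : ∀ x ∈ T, ∀ y ∈ T,
          ((τ.symm x : Fin m) : ℕ) = ((τ.symm y : Fin m) : ℕ) → x = y :=
        fun x _ y _ h => τ.symm.injective (Fin.val_injective h)
      rw [hT', Finset.sum_image hinj]
      refine Finset.sum_congr rfl fun t _ => ?_
      rw [hcN]; dsimp only; rw [dif_pos (τ.symm t).isLt]
      simp only [Fin.eta, Equiv.apply_symm_apply]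
    have e6 : ∑ n ∈ T', cN n ≤ ∑ j ∈ range T'.card, cN j := sum_le_sorted cN hcN_anti T'
    have e7 : ∑ j ∈ range T'.card, cN j ≤ ∑ j ∈ range k, cN j :=
      Finset.sum_le_sum_of_subset_of_nonneg
        (Finset.range_subset_range.mpr (by omega)) fun j _ _ => hcN0 j
    linarith
  have key1 : ∀ k, ∑ i ∈ range k, bN i ≤ ∑ i ∈ range k, cN i := by
    intro k
    by_cases hk : k ≤ m * ℓ
    · exact key1core k hk
    · have h1 : ∑ i ∈ range k, bN i = ∑ i ∈ range (m * ℓ), bN i := by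
        refine (Finset.sum_subset (Finset.range_subset_range.mpr (by omega))
          fun x hx hnx => ?_).symm
        have hxm : ¬ x < m * ℓ := fun h => hnx (Finset.mem_range.mpr h)
        rw [hbN]; dsimp only; rw [dif_neg hxm]
      have h2 : ∑ i ∈ range (m * ℓ), cN i ≤ ∑ i ∈ range k, cN i :=
        Finset.sum_le_sum_of_subset_of_nonneg
          (Finset.range_subset_range.mpr (by omega)) fun j _ _ => hcN0 j
      rw [h1]
      exact le_trans (key1core (m * ℓ) le_rfl) h2
  -- the prefix-sum comparison between wN and ρ * vN
  have key2 : ∀ k, k ≤ m → ∑ i ∈ range k, wN i ≤ ∑ i ∈ range k, (ρ * vN i) := by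
    intro k hk
    rcases Nat.eq_zero_or_pos k with rfl | hk0
    · simp
    have htm : k - 1 < m := by omega
    set t : Fin m := ⟨k - 1, htm⟩ with ht
    have hkt : k = (t : ℕ) + 1 := by rw [ht]; simp only [Fin.val_mk]; omega
    have hPw : ∑ i ∈ Finset.Iic t, w (Fin.castLE hKm i) = ∑ i ∈ range k, wN i := by
      conv_rhs => rw [hkt]
      refine sum_Iic_fin _ _ t fun i _ => ?_
      rw [hwN]; dsimp only
      rw [dif_pos (lt_of_lt_of_le i.isLt hKm)]
      rfl
    have hPv : ∑ i ∈ Finset.Iic t, aggW m ℓ w i = ∑ i ∈ range k, vN i := by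
      conv_rhs => rw [hkt]
      refine sum_Iic_fin _ _ t fun i _ => ?_
      rw [hvN]; dsimp only
      rw [dif_pos i.isLt]
    have hmulsum : ∑ i ∈ range k, (ρ * vN i) = ρ * ∑ i ∈ range k, vN i :=
      (Finset.mul_sum _ _ _).symm
    have hQ0 : 0 ≤ ∑ i ∈ Finset.Iic t, aggW m ℓ w i :=
      Finset.sum_nonneg fun i _ => Finset.sum_nonneg fun r _ => hw0 _
    rcases eq_or_lt_of_le hQ0 with hQz | hQpos
    · have hz : ∀ u ∈ Finset.Iic t, aggW m ℓ w u = 0 :=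
        (Finset.sum_eq_zero_iff_of_nonneg
          (fun i _ => Finset.sum_nonneg fun r _ => hw0 _)).mp hQz.symm
      have hPz : ∑ i ∈ Finset.Iic t, w (Fin.castLE hKm i) = 0 := by
        refine Finset.sum_eq_zero fun i hi => ?_
        have hu : (finProdFinEquiv.symm (Fin.castLE hKm i)).1 ∈ Finset.Iic t := by
          simp only [Finset.mem_Iic] at hi ⊢
          rw [Fin.le_def] at hi ⊢
          have h1 : ((finProdFinEquiv.symm (Fin.castLE hKm i)).1 : ℕ) = (i : ℕ) / ℓ := rfl
          rw [h1]
          have h3 : (i : ℕ) / ℓ ≤ (i : ℕ) := Nat.div_le_self _ _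
          omega
        have hzu := hz _ hu
        have h4 : w (finProdFinEquiv
            ((finProdFinEquiv.symm (Fin.castLE hKm i)).1,
             (finProdFinEquiv.symm (Fin.castLE hKm i)).2)) = 0 := by
          have h5 := (Finset.sum_eq_zero_iff_of_nonneg
            (fun r (_ : r ∈ Finset.univ) => hw0 _)).mp hzu
          exact h5 _ (Finset.mem_univ _)
        rw [Prod.mk.eta, Equiv.apply_symm_apply] at h4
        exact h4
      rw [← hPw, hPz, hmulsum, ← hPv, ← hQz, mul_zero]
    · have hratio : (∑ i ∈ Finset.Iic t, w (Fin.castLE hKm i)) /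
          (∑ i ∈ Finset.Iic t, aggW m ℓ w i) ≤ ρ := by
        rw [hρ]
        exact Finset.le_sup' (fun t : Fin m =>
          (∑ i ∈ Finset.Iic t, w (Fin.castLE (Nat.le_mul_of_pos_right m hℓ) i)) /
          (∑ i ∈ Finset.Iic t, aggW m ℓ w i)) (Finset.mem_univ t)
      have hP : ∑ i ∈ Finset.Iic t, w (Fin.castLE hKm i)
          ≤ ρ * ∑ i ∈ Finset.Iic t, aggW m ℓ w i := (div_le_iff₀ hQpos).mp hratio
      rw [← hPw, hmulsum, ← hPv]
      exact hP
  -- the sum conversions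
  have conv1 : OWA w a = ∑ i ∈ range (m * ℓ), wN i * bN i := by
    rw [← Fin.sum_univ_eq_sum_range (fun i => wN i * bN i) (m * ℓ)]
    simp only [OWA]
    rw [← hσ]
    refine Finset.sum_congr rfl fun k _ => ?_
    rw [hwN, hbN]; dsimp only
    rw [dif_pos k.isLt, dif_pos k.isLt]
  have conv2 : (ℓ : ℝ) * ρ * OWA (aggW m ℓ w) (aggA m ℓ a)
      = ∑ j ∈ range m, cN j * (ρ * vN j) := by
    rw [← Fin.sum_univ_eq_sum_range (fun j => cN j * (ρ * vN j)) m]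
    simp only [OWA]
    rw [← hτ, Finset.mul_sum]
    refine Finset.sum_congr rfl fun k _ => ?_
    rw [hSA (τ k), hcN, hvN]; dsimp only
    rw [dif_pos k.isLt, dif_pos k.isLt]
    simp only [Fin.eta]
    field_simp
  -- assembling
  have step1 : ∑ i ∈ range (m * ℓ), wN i * bN i ≤ ∑ i ∈ range (m * ℓ), wN i * cN i :=
    abel_le (m * ℓ) wN bN cN hwN_anti hwN0 (fun k _ => key1 k)
  have step2 : ∑ i ∈ range (m * ℓ), wN i * cN i = ∑ i ∈ range m, wN i * cN i := by
    refine (Finset.sum_subset (Finset.range_subset_range.mpr hKm) fun x hx hnx => ?_).symm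
    have hxm : ¬ x < m := fun h => hnx (Finset.mem_range.mpr h)
    rw [hcN]; dsimp only; rw [dif_neg hxm, mul_zero]
  have step3 : ∑ i ∈ range m, wN i * cN i ≤ ∑ i ∈ range m, cN i * (ρ * vN i) := by
    have := abel_le m cN wN (fun i => ρ * vN i) hcN_anti hcN0 key2
    calc ∑ i ∈ range m, wN i * cN i = ∑ i ∈ range m, cN i * wN i := by
          exact Finset.sum_congr rfl fun i _ => mul_comm _ _
      _ ≤ ∑ i ∈ range m, cN i * (ρ * vN i) := this
  rw [conv1, conv2]
  exact le_trans step1 (le_trans (le_of_eq step2) step3)
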